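/- Suppose x₃, x₄ : [0,T) → ℝ satisfy ẍ₃ = 0 and ẍ₄ = ẋ₃ẋ₄x₄² with x₃(t) = t, x₄(0) = 1, ẋ₄(0) = 1, on a maximal interval [0,T). Then T < ∞, x₄(t) ≥ 1 for all t ∈ [0,T), and ẋ₄(t) → ∞ as t → T. Consequently the quantity -½x₄⁴ - 2ẋ₄x₄ tends to -∞ as t → T. -/

import Mathlib

open Set Filter Topology intervalIntegral

noncomputable def Gfun (x : ℝ) : ℝ := ∫ s in (1:ℝ)..x, 3 / (s ^ 3 + 2)

lemma gpos {s : ℝ} (hs : 0 < s) : 0 < s ^ 3 + 2 := by positivity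

lemma gcont {s : ℝ} (hs : 0 < s) : ContinuousAt (fun u : ℝ => 3 / (u ^ 3 + 2)) s := by
  exact continuousAt_const.div (by fun_prop) (ne_of_gt (gpos hs))

lemma gcontOn : ContinuousOn (fun u : ℝ => 3 / (u ^ 3 + 2)) (Ioi 0) :=
  fun s hs => (gcont hs).continuousWithinAt

lemma Gderiv {x : ℝ} (hx : 0 < x) : HasDerivAt Gfun (3 / (x ^ 3 + 2)) x := by
  have hsub : uIcc (1:ℝ) x ⊆ Ioi 0 := by
    intro s hs
    have h1 : min 1 x ≤ s := hs.1
    have h2 : (0:ℝ) < min 1 x := lt_min one_pos hx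
    exact lt_of_lt_of_le h2 h1
  have hint : IntervalIntegrable (fun u : ℝ => 3 / (u ^ 3 + 2)) MeasureTheory.volume 1 x :=
    (gcontOn.mono hsub).intervalIntegrable
  exact intervalIntegral.integral_hasDerivAt_right hint
    (gcontOn.stronglyMeasurableAtFilter isOpen_Ioi x hx) (gcont hx)

lemma GstrictMono : StrictMonoOn Gfun (Ioi 0) := by
  refine strictMonoOn_of_deriv_pos (convex_Ioi 0) ?_ ?_
  · exact fun x hx => (Gderiv hx).differentiableAt.continuousAt.continuousWithinAt
  · intro x hx
    rw [interior_Ioi] at hx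
    rw [(Gderiv hx).deriv]
    have := gpos hx
    positivity

lemma Gbound {x : ℝ} (hx : 1 ≤ x) : Gfun x ≤ 3 / 2 := by
  have hsub : uIcc (1:ℝ) x ⊆ Ioi 0 := by
    rw [uIcc_of_le hx]
    intro s hs; exact lt_of_lt_of_le one_pos hs.1
  have hint : IntervalIntegrable (fun u : ℝ => 3 / (u ^ 3 + 2)) MeasureTheory.volume 1 x :=
    (gcontOn.mono hsub).intervalIntegrable
  have hint2 : IntervalIntegrable (fun u : ℝ => 3 * u ^ (-3 : ℤ)) MeasureTheory.volume 1 x := by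
    apply ContinuousOn.intervalIntegrable
    apply ContinuousOn.mul continuousOn_const
    intro s hs
    have hs0 : (0:ℝ) < s := lt_of_lt_of_le one_pos ((uIcc_of_le hx ▸ hs).1)
    exact ContinuousAt.continuousWithinAt (continuousAt_zpow₀ _ _ (Or.inl (ne_of_gt hs0)))
  have hmono : Gfun x ≤ ∫ s in (1:ℝ)..x, 3 * s ^ (-3 : ℤ) := by
    apply intervalIntegral.integral_mono_on hx hint hint2
    intro s hs
    have hs1 : (1:ℝ) ≤ s := hs.1
    have hs0 : (0:ℝ) < s := lt_of_lt_of_le one_pos hs1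
    have hs3 : (0:ℝ) < s ^ 3 := by positivity
    have h3 : (3:ℝ) * s ^ (-3:ℤ) = 3 / s ^ 3 := by
      norm_num [zpow_neg, div_eq_mul_inv]
    rw [h3, div_le_div_iff₀ (gpos hs0) hs3]
    nlinarith
  have hcomp : (∫ s in (1:ℝ)..x, 3 * s ^ (-3 : ℤ)) ≤ 3 / 2 := by
    rw [intervalIntegral.integral_const_mul]
    rw [integral_zpow (by
      right
      refine ⟨by norm_num, ?_⟩
      rw [uIcc_of_le hx]
      intro h
      exact absurd h.1 (by norm_num))]
    have hx0 : (0:ℝ) < x := lt_of_lt_of_le one_pos hx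
    norm_num
    ring_nf
    nlinarith [inv_pos.mpr (zpow_pos hx0 (2:ℤ))]
  linarith

lemma Gone : Gfun 1 = 0 := intervalIntegral.integral_same

/-- `x₄` solves `ẍ₄ = ẋ₃ ẋ₄ x₄²` (with `x₃ t = t`) on `[0, T)`, `T : EReal`. -/
def SolvesGeo (x₃ x₄ : ℝ → ℝ) (T : EReal) : Prop :=
  ∀ t : ℝ, 0 ≤ t → (t : EReal) < T →
    DifferentiableAt ℝ x₃ t ∧ DifferentiableAt ℝ (deriv x₃) t ∧
    DifferentiableAt ℝ x₄ t ∧ DifferentiableAt ℝ (deriv x₄) t ∧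
    deriv (deriv x₃) t = 0 ∧
    deriv (deriv x₄) t = deriv x₃ t * deriv x₄ t * (x₄ t) ^ 2

theorem stmt_12 (x₃ x₄ : ℝ → ℝ) (T : EReal) (hT : 0 < T)
    (hx₃ : ∀ t : ℝ, x₃ t = t) (hx₄0 : x₄ 0 = 1) (hx₄'0 : deriv x₄ 0 = 1)
    (hsol : SolvesGeo x₃ x₄ T)
    (hmax : ¬ ∃ (T' : EReal) (y₄ : ℝ → ℝ), T < T' ∧
        (∀ t : ℝ, 0 ≤ t → (t : EReal) < T → y₄ t = x₄ t) ∧ SolvesGeo x₃ y₄ T') :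
    T < ⊤ ∧
    (∀ t : ℝ, 0 ≤ t → (t : EReal) < T → 1 ≤ x₄ t) ∧
    Filter.Tendsto (deriv x₄) (nhdsWithin T.toReal (Set.Iio T.toReal)) Filter.atTop ∧
    Filter.Tendsto (fun t : ℝ => -(1 / 2) * (x₄ t) ^ 4 - 2 * deriv x₄ t * x₄ t)
      (nhdsWithin T.toReal (Set.Iio T.toReal)) Filter.atBot := by
  have hx3 : x₃ = fun t : ℝ => t := funext hx₃
  subst hx3
  have hlt_of_le : ∀ {s t : ℝ}, s ≤ t → (t:EReal) < T → (s:EReal) < T := by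
    intro s t hst h
    exact lt_of_le_of_lt (by exact_mod_cast hst) h
  have hd3 : ∀ t : ℝ, deriv (fun u : ℝ => u) t = 1 := by simp
  have hODE : ∀ t : ℝ, 0 ≤ t → (t:EReal) < T →
      deriv (deriv x₄) t = deriv x₄ t * (x₄ t) ^ 2 := by
    intro t ht hT'
    have h := (hsol t ht hT').2.2.2.2.2
    rw [h, hd3, one_mul]
  have hdiff4 : ∀ t : ℝ, 0 ≤ t → (t:EReal) < T → DifferentiableAt ℝ x₄ t :=
    fun t h h' => (hsol t h h').2.2.1
  have hdiffv : ∀ t : ℝ, 0 ≤ t → (t:EReal) < T → DifferentiableAt ℝ (deriv x₄) t :=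
    fun t h h' => (hsol t h h').2.2.2.1
  -- the first integral: v = (x₄³+2)/3
  have hkey : ∀ t : ℝ, 0 ≤ t → (t:EReal) < T → deriv x₄ t = ((x₄ t) ^ 3 + 2) / 3 := by
    intro t ht htT
    have hconst := constant_of_has_deriv_right_zero
      (f := fun s => deriv x₄ s - ((x₄ s) ^ 3 + 2) / 3) (a := 0) (b := t) ?_ ?_
    · have h1 := hconst t (right_mem_Icc.mpr ht)
      rw [hx₄0, hx₄'0] at h1
      norm_num at h1
      linarith
    · intro s hs
      have hs0 := hs.1
      have hsT := hlt_of_le hs.2 htT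
      exact ((hdiffv s hs0 hsT).sub
        ((((hdiff4 s hs0 hsT).pow 3).add_const 2).div_const 3)).continuousAt.continuousWithinAt
    · intro s hs
      have hs0 := hs.1
      have hsT := hlt_of_le hs.2.le htT
      have h1 : HasDerivAt (deriv x₄) (deriv (deriv x₄) s) s := (hdiffv s hs0 hsT).hasDerivAt
      have h2 : HasDerivAt x₄ (deriv x₄ s) s := (hdiff4 s hs0 hsT).hasDerivAt
      have h4 : HasDerivAt (fun u => deriv x₄ u - ((x₄ u) ^ 3 + 2) / 3) 0 s := by
        have h5 := h1.sub (((h2.pow 3).add_const 2).div_const 3)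
        refine h5.congr_deriv ?_
        rw [hODE s hs0 hsT]
        push_cast
        ring
      exact h4.hasDerivWithinAt
  -- x₄ ≥ 1
  have hge1 : ∀ t : ℝ, 0 ≤ t → (t:EReal) < T → 1 ≤ x₄ t := by
    intro t₀ ht₀ ht₀T
    by_contra hlt
    push_neg at hlt
    have hcont : ContinuousOn x₄ (Icc 0 t₀) := fun s hs =>
      (hdiff4 s hs.1 (hlt_of_le hs.2 ht₀T)).continuousAt.continuousWithinAt
    obtain ⟨t₁, ht₁mem, hx₁ge, hx₁lt⟩ : ∃ t₁ ∈ Icc 0 t₀, -1 ≤ x₄ t₁ ∧ x₄ t₁ < 1 := by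
      rcases le_or_gt (-1) (x₄ t₀) with h | h
      · exact ⟨t₀, right_mem_Icc.mpr ht₀, h, hlt⟩
      · have hmem : (-1:ℝ) ∈ Icc (x₄ t₀) (x₄ 0) := ⟨h.le, by rw [hx₄0]; norm_num⟩
        obtain ⟨c, hc, hceq⟩ := intermediate_value_Icc' ht₀ hcont hmem
        exact ⟨c, hc, by rw [hceq], by rw [hceq]; norm_num⟩
    have ht₁T : (t₁:EReal) < T := hlt_of_le ht₁mem.2 ht₀T
    set S := Icc 0 t₁ ∩ x₄ ⁻¹' (Iic (x₄ t₁)) with hSdef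
    have hcont1 : ContinuousOn x₄ (Icc 0 t₁) := fun s hs =>
      (hdiff4 s hs.1 (hlt_of_le hs.2 ht₁T)).continuousAt.continuousWithinAt
    have hScl : IsClosed S := hcont1.preimage_isClosed_of_isClosed isClosed_Icc isClosed_Iic
    have hne : t₁ ∈ S := ⟨⟨ht₁mem.1, le_refl _⟩, Set.mem_preimage.mpr (mem_Iic.mpr (le_refl _))⟩
    have hbddb : BddBelow S := ⟨0, fun s hs => hs.1.1⟩
    set c := sInf S with hcdef
    have hc : c ∈ S := hScl.csInf_mem ⟨t₁, hne⟩ hbddb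
    have hc0 : 0 ≤ c := hc.1.1
    have hct₁ : c ≤ t₁ := hc.1.2
    have hcx : x₄ c ≤ x₄ t₁ := mem_Iic.mp (Set.mem_preimage.mp hc.2)
    have hcT : (c:EReal) < T := hlt_of_le hct₁ ht₁T
    have hcpos : 0 < c := by
      rcases eq_or_lt_of_le hc0 with h | h
      · exfalso
        rw [← h] at hcx
        rw [hx₄0] at hcx
        linarith
      · exact h
    have hlow : ∀ s ∈ S, c ≤ s := fun s hs => csInf_le hbddb hs
    have hIooev : ∀ᶠ s in 𝓝[<] c, s ∈ Ioo 0 c :=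
      eventually_of_mem (Ioo_mem_nhdsLT hcpos) (fun s hs => hs)
    rcases le_or_gt ((x₄ c) ^ 3 + 2) 0 with hneg | hpos
    · have hclt : x₄ c < -1 := by nlinarith [sq_nonneg (x₄ c - 1), sq_nonneg (x₄ c + 1)]
      have hcc : ContinuousAt x₄ c := (hdiff4 c hc0 hcT).continuousAt
      have hev' : ∀ᶠ s in 𝓝 c, x₄ s < x₄ t₁ :=
        hcc (Iio_mem_nhds (lt_of_lt_of_le hclt hx₁ge))
      obtain ⟨s, hs1, hs2⟩ := ((hev'.filter_mono nhdsWithin_le_nhds).and hIooev).exists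
      have hcs : c ≤ s := hlow s ⟨⟨hs2.1.le, hs2.2.le.trans hct₁⟩, Set.mem_preimage.mpr (mem_Iic.mpr hs1.le)⟩
      exact absurd hcs (not_le.mpr hs2.2)
    · have hd : HasDerivAt x₄ (deriv x₄ c) c := (hdiff4 c hc0 hcT).hasDerivAt
      have hdpos : 0 < deriv x₄ c := by
        rw [hkey c hc0 hcT]
        exact div_pos hpos (by norm_num)
      have hslope := hasDerivAt_iff_tendsto_slope.mp hd
      have hslope' : Tendsto (slope x₄ c) (𝓝[<] c) (𝓝 (deriv x₄ c)) :=
        hslope.mono_left (nhdsWithin_mono c (fun s hs => ne_of_lt hs))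
      have hev : ∀ᶠ s in 𝓝[<] c, 0 < slope x₄ c s :=
        hslope'.eventually (eventually_gt_nhds hdpos)
      obtain ⟨s, hsl, hs2⟩ := (hev.and hIooev).exists
      rw [slope_def_field] at hsl
      have hsc : s - c < 0 := sub_neg.mpr hs2.2
      have hnum : x₄ s - x₄ c < 0 := by
        rcases div_pos_iff.mp hsl with ⟨h1, h2⟩ | ⟨h1, h2⟩
        · linarith
        · linarith
      have hcs : c ≤ s := hlow s ⟨⟨hs2.1.le, hs2.2.le.trans hct₁⟩, Set.mem_preimage.mpr (mem_Iic.mpr (by linarith))⟩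
      exact absurd hcs (not_le.mpr hs2.2)
  -- G(x₄ t) = t
  have hGid : ∀ t : ℝ, 0 ≤ t → (t:EReal) < T → Gfun (x₄ t) = t := by
    intro t ht htT
    have hconst := constant_of_has_deriv_right_zero
      (f := fun s => Gfun (x₄ s) - s) (a := 0) (b := t) ?_ ?_
    · have h1 := hconst t (right_mem_Icc.mpr ht)
      rw [hx₄0, Gone] at h1
      linarith
    · intro s hs
      have hs0 := hs.1
      have hsT := hlt_of_le hs.2 htT
      have hx1 : (0:ℝ) < x₄ s := lt_of_lt_of_le one_pos (hge1 s hs0 hsT)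
      exact (((Gderiv hx1).comp s (hdiff4 s hs0 hsT).hasDerivAt).sub
        (hasDerivAt_id s)).differentiableAt.continuousAt.continuousWithinAt
    · intro s hs
      have hs0 := hs.1
      have hsT := hlt_of_le hs.2.le htT
      have hx1 : (0:ℝ) < x₄ s := lt_of_lt_of_le one_pos (hge1 s hs0 hsT)
      have hcomp := (Gderiv hx1).comp s (hdiff4 s hs0 hsT).hasDerivAt
      have h4 := hcomp.sub (hasDerivAt_id s)
      have hval : 3 / ((x₄ s) ^ 3 + 2) * deriv x₄ s - 1 = 0 := by
        rw [hkey s hs0 hsT]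
        field_simp
        ring
      rw [hval] at h4
      exact h4.hasDerivWithinAt
  -- T is finite
  have hTtop : T < ⊤ := by
    by_contra h
    push_neg at h
    have hTeq : T = ⊤ := top_le_iff.mp h
    have h2T : ((2:ℝ):EReal) < T := by rw [hTeq]; exact EReal.coe_lt_top 2
    have h2 := hGid 2 (by norm_num) h2T
    have hb := Gbound (hge1 2 (by norm_num) h2T)
    rw [h2] at hb
    norm_num at hb
  set τ := T.toReal with hτdef
  have hTne : T ≠ ⊤ := hTtop.ne
  have hTnb : T ≠ ⊥ := (lt_of_le_of_lt bot_le hT).ne'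
  have hTcoe : ((τ : ℝ) : EReal) = T := EReal.coe_toReal hTne hTnb
  have hτpos : 0 < τ := by
    have : ((0:ℝ):EReal) < ((τ:ℝ):EReal) := by rw [hTcoe]; exact_mod_cast hT
    exact_mod_cast this
  have hltT : ∀ {t : ℝ}, t < τ → (t:EReal) < T := by
    intro t h
    rw [← hTcoe]
    exact_mod_cast h
  have hltτ : ∀ {t : ℝ}, (t:EReal) < T → t < τ := by
    intro t h
    rw [← hTcoe] at h
    exact_mod_cast h
  have hmono : ∀ s t : ℝ, 0 ≤ s → s ≤ t → t < τ → x₄ s ≤ x₄ t := by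
    intro s t hs hst htτ
    by_contra h
    push_neg at h
    have hsτ : s < τ := lt_of_le_of_lt hst htτ
    have h1 := GstrictMono
      (mem_Ioi.mpr (lt_of_lt_of_le one_pos (hge1 t (hs.trans hst) (hltT htτ))))
      (mem_Ioi.mpr (lt_of_lt_of_le one_pos (hge1 s hs (hltT hsτ)))) h
    rw [hGid t (hs.trans hst) (hltT htτ), hGid s hs (hltT hsτ)] at h1
    linarith
  set x' := fun t : ℝ => x₄ (max t 0) with hx'def
  have hx'mono : MonotoneOn x' (Iio τ) := by
    intro a ha b hb hab
    exact hmono (max a 0) (max b 0) (le_max_right a 0)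
      (max_le_max hab (le_refl 0)) (max_lt hb hτpos)
  have hx'eq : x' =ᶠ[𝓝[<] τ] x₄ := by
    filter_upwards [Ioo_mem_nhdsLT hτpos] with s hs
    simp only [hx'def]
    rw [max_eq_left hs.1.le]
  -- the blow-up of deriv x₄
  have hblow : Tendsto (deriv x₄) (𝓝[<] τ) atTop := by
    have htendx : Tendsto x₄ (𝓝[<] τ) atTop := by
      by_cases hbdd : BddAbove (x' '' Iio τ)
      · exfalso
        set L := sSup (x' '' Iio τ) with hLdef
        have htend' : Tendsto x' (𝓝[<] τ) (𝓝 L) := hx'mono.tendsto_nhdsLT hbdd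
        have htendx : Tendsto x₄ (𝓝[<] τ) (𝓝 L) := htend'.congr' hx'eq
        have hL1 : 1 ≤ L := by
          have h0 : x' 0 ∈ x' '' Iio τ := mem_image_of_mem _ (mem_Iio.mpr hτpos)
          have hle := le_csSup hbdd h0
          simp only [hx'def, max_self] at hle
          rw [hx₄0] at hle
          exact hle
        have hL0 : (0:ℝ) < L := lt_of_lt_of_le one_pos hL1
        have hGL : Gfun L = τ := by
          have h1 : Tendsto (fun t => Gfun (x₄ t)) (𝓝[<] τ) (𝓝 (Gfun L)) :=
            ((Gderiv hL0).differentiableAt.continuousAt.tendsto).comp htendx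
          have h2 : Tendsto (fun t => Gfun (x₄ t)) (𝓝[<] τ) (𝓝 τ) := by
            have heq : (fun t : ℝ => t) =ᶠ[𝓝[<] τ] (fun t => Gfun (x₄ t)) := by
              filter_upwards [Ioo_mem_nhdsLT hτpos] with s hs
              exact (hGid s hs.1.le (hltT hs.2)).symm
            exact Tendsto.congr' heq (tendsto_id.mono_left nhdsWithin_le_nhds)
          exact tendsto_nhds_unique h1 h2
        have hf : ContDiffAt ℝ 1 (fun w : ℝ => (w ^ 3 + 2) / 3) L :=
          (((contDiff_id.pow 3).add contDiff_const).div_const 3).contDiffAt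
        obtain ⟨z, hzτ, ε, hε, hz⟩ := hf.exists_forall_mem_closedBall_exists_eq_forall_mem_Ioo_hasDerivAt₀ τ
        have hzcont : ContinuousAt z τ :=
          (hz τ (by constructor <;> linarith)).differentiableAt.continuousAt
        have hev : ∀ᶠ s in 𝓝 τ, (1:ℝ)/2 < z s := by
          apply hzcont (Ioi_mem_nhds _)
          rw [hzτ]
          linarith
        obtain ⟨δ, hδ, hball⟩ := Metric.eventually_nhds_iff.mp hev
        set ε' := min (min ε δ) τ / 2 with hε'def
        have hminpos : 0 < min (min ε δ) τ := lt_min (lt_min hε hδ) hτpos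
        have hε'pos : 0 < ε' := by rw [hε'def]; linarith
        have hε'ε : ε' < ε := by
          have h1 : min (min ε δ) τ ≤ ε := le_trans (min_le_left _ _) (min_le_left _ _)
          rw [hε'def]; linarith
        have hε'δ : ε' < δ := by
          have h1 : min (min ε δ) τ ≤ δ := le_trans (min_le_left _ _) (min_le_right _ _)
          rw [hε'def]; linarith
        have hε'τ : ε' < τ := by
          have h1 : min (min ε δ) τ ≤ τ := min_le_right _ _
          rw [hε'def]; linarith
        have hzsub : Ioo (τ - ε') (τ + ε') ⊆ Ioo (τ - ε) (τ + ε) := by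
          intro s hs
          obtain ⟨h1, h2⟩ := hs
          exact ⟨by linarith, by linarith⟩
        have hzpos : ∀ s ∈ Ioo (τ - ε') (τ + ε'), (0:ℝ) < z s := by
          intro s hs
          have hd : dist s τ < δ := by
            rw [Real.dist_eq, abs_lt]
            obtain ⟨h1, h2⟩ := hs
            constructor <;> linarith
          linarith [hball hd]
        have hGz : ∀ s ∈ Ioo (τ - ε') (τ + ε'), Gfun (z s) = s := by
          intro s hs
          have hsubset : Icc (min s τ) (max s τ) ⊆ Ioo (τ - ε') (τ + ε') := by
            intro u hu
            constructor
            · exact lt_of_lt_of_le (lt_min hs.1 (by linarith)) hu.1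
            · exact lt_of_le_of_lt hu.2 (max_lt hs.2 (by linarith))
          have hC := constant_of_has_deriv_right_zero
            (f := fun u => Gfun (z u) - u) (a := min s τ) (b := max s τ) ?_ ?_
          · have h1 := hC s ⟨min_le_left _ _, le_max_left _ _⟩
            have h2 := hC τ ⟨min_le_right _ _, le_max_right _ _⟩
            have h3 : Gfun (z τ) - τ = 0 := by rw [hzτ, hGL]; ring
            linarith
          · intro u hu
            have hu' := hsubset hu
            have hz' := hz u (hzsub hu')
            exact (((Gderiv (hzpos u hu')).comp u hz').sub
              (hasDerivAt_id u)).differentiableAt.continuousAt.continuousWithinAt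
          · intro u hu
            have hu' := hsubset (Ico_subset_Icc_self hu)
            have hz' := hz u (hzsub hu')
            have hcomp := (Gderiv (hzpos u hu')).comp u hz'
            have h4 := hcomp.sub (hasDerivAt_id u)
            have hval : 3 / ((z u) ^ 3 + 2) * (((z u) ^ 3 + 2) / 3) - 1 = 0 := by
              have := gpos (hzpos u hu')
              field_simp
              ring
            rw [hval] at h4
            exact h4.hasDerivWithinAt
        have hmatch : ∀ s : ℝ, τ - ε' < s → s < τ → z s = x₄ s := by
          intro s h1 h2
          have hs0 : (0:ℝ) ≤ s := by linarith
          have hsT : (s:EReal) < T := hltT h2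
          have hmem1 : s ∈ Ioo (τ - ε') (τ + ε') := ⟨h1, by linarith⟩
          apply GstrictMono.injOn (mem_Ioi.mpr (hzpos s hmem1))
            (mem_Ioi.mpr (lt_of_lt_of_le one_pos (hge1 s hs0 hsT)))
          rw [hGz s hmem1, hGid s hs0 hsT]
        set y₄ := fun s : ℝ => if s < τ then x₄ s else z s with hydef
        have hyx : ∀ s : ℝ, s < τ → y₄ s = x₄ s := fun s h => if_pos h
        have hyz : ∀ s ∈ Ioo (τ - ε') (τ + ε'), y₄ s = z s := by
          intro s hs
          by_cases h : s < τ
          · rw [hyx s h]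
            exact (hmatch s hs.1 h).symm
          · simp only [hydef]
            rw [if_neg h]
        apply hmax
        refine ⟨((τ + ε' / 2 : ℝ) : EReal), y₄, ?_, ?_, ?_⟩
        · rw [← hTcoe]
          exact_mod_cast (by linarith : τ < τ + ε' / 2)
        · intro t ht0 htT
          exact hyx t (hltτ htT)
        · intro t ht0 htT'
          have htlt : t < τ + ε' / 2 := by exact_mod_cast htT'
          have hd3' : (deriv fun u : ℝ => u) = fun _ : ℝ => (1:ℝ) := deriv_id''
          rcases lt_or_ge t τ with hcase | hcase
          · have heq : y₄ =ᶠ[𝓝 t] x₄ := by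
              filter_upwards [Iio_mem_nhds hcase] with s hs
              exact hyx s hs
            obtain ⟨h1, h2, h3, h4, h5, h6⟩ := hsol t ht0 (hltT hcase)
            refine ⟨h1, h2, ?_, ?_, h5, ?_⟩
            · exact heq.differentiableAt_iff.mpr h3
            · exact (heq.deriv).differentiableAt_iff.mpr h4
            · have e1 : deriv (deriv y₄) t = deriv (deriv x₄) t := (heq.deriv).deriv_eq
              have e2 : deriv y₄ t = deriv x₄ t := heq.deriv_eq
              have e3 : y₄ t = x₄ t := heq.eq_of_nhds
              rw [e1, e2, e3, h6]
          · have htmem : t ∈ Ioo (τ - ε') (τ + ε') := ⟨by linarith, by linarith⟩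
            have heq : y₄ =ᶠ[𝓝 t] z := by
              filter_upwards [Ioo_mem_nhds htmem.1 htmem.2] with s hs
              exact hyz s hs
            have hzt := hz t (hzsub htmem)
            have hdz : ∀ s ∈ Ioo (τ - ε') (τ + ε'), deriv z s = ((z s) ^ 3 + 2) / 3 :=
              fun s hs => (hz s (hzsub hs)).deriv
            have heq2 : deriv z =ᶠ[𝓝 t] (fun s => ((z s) ^ 3 + 2) / 3) := by
              filter_upwards [Ioo_mem_nhds htmem.1 htmem.2] with s hs
              exact hdz s hs
            have hdiffz : DifferentiableAt ℝ z t := hzt.differentiableAt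
            have hdiff2 : DifferentiableAt ℝ (fun s => ((z s) ^ 3 + 2) / 3) t :=
              (((hdiffz.pow 3).add_const 2).div_const 3)
            refine ⟨differentiableAt_id, ?_, ?_, ?_, ?_, ?_⟩
            · rw [hd3']
              exact differentiableAt_const 1
            · exact heq.differentiableAt_iff.mpr hdiffz
            · exact (heq.deriv).differentiableAt_iff.mpr
                (heq2.differentiableAt_iff.mpr hdiff2)
            · rw [hd3']
              simp
            · have e1 : deriv (deriv y₄) t = deriv (deriv z) t := (heq.deriv).deriv_eq
              have e2 : deriv (deriv z) t = deriv (fun s => ((z s) ^ 3 + 2) / 3) t :=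
                heq2.deriv_eq
              have e3 : deriv (fun s => ((z s) ^ 3 + 2) / 3) t
                  = 3 * z t ^ 2 * ((z t ^ 3 + 2) / 3) / 3 := by
                have hder := ((hzt.pow 3).add_const 2).div_const 3
                have := hder.deriv
                refine this.trans ?_
                push_cast
                ring
              have e4 : deriv y₄ t = ((z t) ^ 3 + 2) / 3 := by
                rw [heq.deriv_eq, hdz t htmem]
              have e5 : y₄ t = z t := heq.eq_of_nhds
              rw [e1, e2, e3, e4, e5, hd3']
              ring
      · -- unbounded case
        rw [tendsto_atTop]
        intro M
        obtain ⟨y, hy, hMy⟩ := not_bddAbove_iff.mp hbdd M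
        obtain ⟨t₀, ht₀, rfl⟩ := hy
        set s₀ := max t₀ 0 with hs₀def
        have hs₀τ : s₀ < τ := max_lt ht₀ hτpos
        have hs₀0 : 0 ≤ s₀ := le_max_right _ _
        filter_upwards [Ioo_mem_nhdsLT hs₀τ] with s hs
        exact le_of_lt (lt_of_lt_of_le hMy (hmono s₀ s hs₀0 hs.1.le hs.2))
    apply tendsto_atTop_mono' (𝓝[<] τ) _ htendx
    filter_upwards [Ioo_mem_nhdsLT hτpos] with s hs
    have hs0 : (0:ℝ) ≤ s := hs.1.le
    have hsT : (s:EReal) < T := hltT hs.2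
    rw [hkey s hs0 hsT]
    have h1 := hge1 s hs0 hsT
    nlinarith [mul_nonneg (sq_nonneg (x₄ s - 1)) (by linarith : (0:ℝ) ≤ x₄ s + 2)]
  refine ⟨hTtop, hge1, hblow, ?_⟩
  have hneg : Tendsto (fun t : ℝ => -(deriv x₄ t)) (𝓝[<] τ) atBot :=
    tendsto_neg_atTop_atBot.comp hblow
  apply tendsto_atBot_mono' (𝓝[<] τ) _ hneg
  filter_upwards [Ioo_mem_nhdsLT hτpos] with s hs
  have hs0 : (0:ℝ) ≤ s := hs.1.le
  have hsT : (s:EReal) < T := hltT hs.2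
  have hx1 := hge1 s hs0 hsT
  have hv1 : 1 ≤ deriv x₄ s := by
    rw [hkey s hs0 hsT]
    nlinarith [mul_nonneg (by linarith : (0:ℝ) ≤ x₄ s - 1)
      (by nlinarith [sq_nonneg (x₄ s)] : (0:ℝ) ≤ x₄ s ^ 2 + x₄ s + 1)]
  have hx4 : (0:ℝ) ≤ x₄ s ^ 4 := by positivity
  have hvx : 2 * deriv x₄ s ≤ 2 * deriv x₄ s * x₄ s := by nlinarith
  linarith
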